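/- The function $\operatorname{LCS}_3$ is continuous on the space of pairs of compact real trees with the Gromov–Hausdorff topology: if $T^n\to T$ and $S^n\to S$ in Gromov–Hausdorff distance, then $\operatorname{LCS}_3(T^n,S^n)\to\operatorname{LCS}_3(T,S)$, where $\operatorname{LCS}_3(T,S)=\sup\{\tfrac12 d(x_1,x_2)+\tfrac12 d(x_2,x_3)+\tfrac12 d(x_3,x_1)\}$ over triples $x_1,x_2,x_3\in T$, $x_1',x_2',x_3'\in S$ with $d(x_i,x_j)=d'(x_i',x_j')$ for all $i,j$. -/
import Mathlib


/-- The geodesic segment between two points of a (real) tree, characterized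
metrically. -/
def geo {X : Type*} [MetricSpace X] (x y : X) : Set X :=
  {w | dist x w + dist w y = dist x y}

/-- A metric space is a real tree if any two points are joined by a unique
isometric arc, and every injective continuous path has the geodesic as image. -/
def IsRealTree (X : Type*) [MetricSpace X] : Prop :=
  (∀ x y : X,
    ∃! g : Set.Icc (0 : ℝ) (dist x y) → X,
      (∀ a b : Set.Icc (0 : ℝ) (dist x y), dist (g a) (g b) = |(a : ℝ) - (b : ℝ)|) ∧
      g ⟨0, Set.left_mem_Icc.mpr dist_nonneg⟩ = x ∧
      g ⟨dist x y, Set.right_mem_Icc.mpr dist_nonneg⟩ = y) ∧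
  (∀ f : Set.Icc (0 : ℝ) 1 → X, Continuous f → Function.Injective f →
      Set.range f =
        geo (f ⟨0, Set.left_mem_Icc.mpr zero_le_one⟩)
            (f ⟨1, Set.right_mem_Icc.mpr zero_le_one⟩))

/-- The maximal total length of a common Y-shaped subtree: supremum of the
half-perimeter over triples with matching pairwise distances. -/
noncomputable def LCS3 (A B : Type*) [MetricSpace A] [MetricSpace B] : ℝ :=
  sSup {r : ℝ | ∃ (x₁ x₂ x₃ : A) (y₁ y₂ y₃ : B),
    dist x₁ x₂ = dist y₁ y₂ ∧ dist x₂ x₃ = dist y₂ y₃ ∧ dist x₃ x₁ = dist y₃ y₁ ∧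
    r = dist x₁ x₂ / 2 + dist x₂ x₃ / 2 + dist x₃ x₁ / 2}

namespace LCS3Aux

open Set Metric

variable {X : Type*} [MetricSpace X]

/-- The Gromov product (leg of the tripod at `x`). -/
noncomputable def gleg (x y z : X) : ℝ := (dist x y + dist x z - dist y z) / 2

lemma gleg_nonneg (x y z : X) : 0 ≤ gleg x y z := by
  have h := dist_triangle y x z
  rw [dist_comm y x] at h
  unfold gleg; linarith

lemma gleg_add (x y z : X) : gleg x y z + gleg y x z = dist x y := by
  unfold gleg
  rw [dist_comm y x, dist_comm y z]
  ring

/-- A chosen geodesic parametrization. -/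
noncomputable def geod (h : IsRealTree X) (x y : X) : Set.Icc (0 : ℝ) (dist x y) → X :=
  (h.1 x y).choose

lemma geod_spec (h : IsRealTree X) (x y : X) :
    (∀ a b : Set.Icc (0 : ℝ) (dist x y),
      dist (geod h x y a) (geod h x y b) = |(a : ℝ) - (b : ℝ)|) ∧
    geod h x y ⟨0, Set.left_mem_Icc.mpr dist_nonneg⟩ = x ∧
    geod h x y ⟨dist x y, Set.right_mem_Icc.mpr dist_nonneg⟩ = y :=
  (h.1 x y).choose_spec.1

noncomputable def clamp (d t : ℝ) : ℝ := max 0 (min t d)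

lemma clamp_mem {d : ℝ} (hd : 0 ≤ d) (t : ℝ) : clamp d t ∈ Set.Icc 0 d :=
  ⟨le_max_left _ _, max_le hd (min_le_right _ _)⟩

lemma clamp_of_mem {d t : ℝ} (ht : t ∈ Set.Icc 0 d) : clamp d t = t := by
  unfold clamp
  rw [min_eq_left ht.2, max_eq_right ht.1]

lemma abs_min_sub_min (s t d : ℝ) : |min s d - min t d| ≤ |s - t| := by
  rcases le_total s d with hs | hs <;> rcases le_total t d with ht | ht
  · rw [min_eq_left hs, min_eq_left ht]
  · rw [min_eq_left hs, min_eq_right ht, abs_of_nonpos (by linarith),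
      abs_of_nonpos (by linarith)]
    linarith
  · rw [min_eq_right hs, min_eq_left ht, abs_of_nonneg (by linarith),
      abs_of_nonneg (by linarith)]
    linarith
  · rw [min_eq_right hs, min_eq_right ht, sub_self, abs_zero]
    exact abs_nonneg _

lemma clamp_lip (d s t : ℝ) : |clamp d s - clamp d t| ≤ |s - t| := by
  unfold clamp
  calc |max 0 (min s d) - max 0 (min t d)|
      = |max (min s d) 0 - max (min t d) 0| := by rw [max_comm, max_comm (min t d)]
    _ ≤ |min s d - min t d| := abs_max_sub_max_le_abs _ _ _
    _ ≤ |s - t| := abs_min_sub_min s t d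

/-- Geodesic point with clamped parameter. -/
noncomputable def gp (h : IsRealTree X) (x y : X) (t : ℝ) : X :=
  geod h x y ⟨clamp (dist x y) t, clamp_mem dist_nonneg t⟩

lemma gp_dist (h : IsRealTree X) (x y : X) (s t : ℝ) :
    dist (gp h x y s) (gp h x y t) = |clamp (dist x y) s - clamp (dist x y) t| :=
  (geod_spec h x y).1 _ _

lemma gp_param (h : IsRealTree X) (x y : X) {s t : ℝ}
    (hst : clamp (dist x y) s = clamp (dist x y) t) : gp h x y s = gp h x y t := by
  unfold gp
  exact congrArg _ (Subtype.ext hst)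

lemma gp_zero (h : IsRealTree X) (x y : X) : gp h x y 0 = x := by
  have h0 : clamp (dist x y) 0 = 0 := clamp_of_mem ⟨le_rfl, dist_nonneg⟩
  unfold gp
  rw [show (⟨clamp (dist x y) 0, clamp_mem dist_nonneg 0⟩ : Set.Icc (0:ℝ) (dist x y))
      = ⟨0, Set.left_mem_Icc.mpr dist_nonneg⟩ from Subtype.ext h0]
  exact (geod_spec h x y).2.1

lemma gp_last (h : IsRealTree X) (x y : X) : gp h x y (dist x y) = y := by
  have h0 : clamp (dist x y) (dist x y) = dist x y :=
    clamp_of_mem ⟨dist_nonneg, le_rfl⟩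
  unfold gp
  rw [show (⟨clamp (dist x y) (dist x y), clamp_mem dist_nonneg _⟩ :
      Set.Icc (0:ℝ) (dist x y)) = ⟨dist x y, Set.right_mem_Icc.mpr dist_nonneg⟩ from
      Subtype.ext h0]
  exact (geod_spec h x y).2.2

lemma gp_dist_left (h : IsRealTree X) (x y : X) {t : ℝ}
    (ht : t ∈ Set.Icc 0 (dist x y)) : dist x (gp h x y t) = t := by
  have hd := gp_dist h x y 0 t
  rw [gp_zero h x y, clamp_of_mem ⟨le_rfl, dist_nonneg⟩, clamp_of_mem ht, zero_sub,
    abs_neg, abs_of_nonneg ht.1] at hd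
  exact hd

lemma gp_dist_right (h : IsRealTree X) (x y : X) {t : ℝ}
    (ht : t ∈ Set.Icc 0 (dist x y)) : dist (gp h x y t) y = dist x y - t := by
  have hd := gp_dist h x y t (dist x y)
  rw [gp_last h x y, clamp_of_mem ht, clamp_of_mem ⟨dist_nonneg, le_rfl⟩, abs_sub_comm,
    abs_of_nonneg (sub_nonneg.mpr ht.2)] at hd
  exact hd

lemma gp_continuous (h : IsRealTree X) (x y : X) : Continuous (gp h x y) := by
  refine (LipschitzWith.of_dist_le_mul (K := 1) fun s t => ?_).continuous
  rw [gp_dist, Real.dist_eq, NNReal.coe_one, one_mul]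
  exact clamp_lip _ s t

/-- Branch point (median) of three points in a real tree. -/
lemma exists_branch (h : IsRealTree X) (x y z : X) :
    ∃ m : X, dist x m = gleg x y z ∧ dist y m = gleg y x z ∧ dist z m = gleg z x y := by
  by_cases hyz : dist y z = 0
  · have hzy : y = z := by rwa [dist_eq_zero] at hyz
    subst hzy
    refine ⟨y, ?_, ?_, ?_⟩ <;> unfold gleg <;> rw [dist_self] <;>
      [skip; rw [dist_comm y x]; rw [dist_comm y x]] <;> ring
  have htot : 0 < dist y z := lt_of_le_of_ne dist_nonneg (Ne.symm hyz)
  set L := dist x y with hL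
  set A : Set ℝ := {t | t ∈ Set.Icc 0 L ∧ t + dist (gp h x y t) z = dist x z} with hAdef
  have hA0 : (0 : ℝ) ∈ A := by
    refine ⟨⟨le_rfl, dist_nonneg⟩, ?_⟩
    rw [gp_zero, zero_add]
  have hAclosed : IsClosed A := by
    have h1 : IsClosed {t : ℝ | t + dist (gp h x y t) z = dist x z} :=
      isClosed_eq (continuous_id.add ((gp_continuous h x y).dist continuous_const))
        continuous_const
    exact (isClosed_Icc.inter h1)
  have hAbdd : BddAbove A := ⟨L, fun t ht => ht.1.2⟩
  set t₁ := sSup A with ht₁def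
  have ht₁ : t₁ ∈ A := hAclosed.csSup_mem ⟨0, hA0⟩ hAbdd
  have ht₁Icc : t₁ ∈ Set.Icc 0 L := ht₁.1
  set m := gp h x y t₁ with hmdef
  have key1 : t₁ + dist m z = dist x z := ht₁.2
  have hxm : dist x m = t₁ := gp_dist_left h x y ht₁Icc
  have hmy : dist m y = L - t₁ := gp_dist_right h x y ht₁Icc
  set L1 := L - t₁ with hL1def
  set L2 := dist m z with hL2def
  have hL1 : 0 ≤ L1 := sub_nonneg.mpr ht₁Icc.2
  have hL2 : 0 ≤ L2 := dist_nonneg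
  set Stot := L1 + L2 with hSdef
  by_cases hS0 : Stot = 0
  · exfalso
    have h1 : L1 = 0 := by linarith [hL1, hL2, hS0.le, hS0.ge]
    have h2 : L2 = 0 := by linarith
    have : dist y z ≤ dist y m + dist m z := dist_triangle y m z
    rw [dist_comm y m] at this
    have : dist y z ≤ 0 := by rw [hmy] at this; linarith
    linarith
  have hSpos : 0 < Stot := lt_of_le_of_ne (by positivity) (Ne.symm hS0)
  -- the concatenated path from y to z through m
  set F : ℝ → X := fun s => if s ≤ L1 then gp h x y (L - s) else gp h m z (s - L1)
    with hFdef
  have hmL1 : gp h x y (L - L1) = m := by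
    have : L - L1 = t₁ := by rw [hL1def]; ring
    rw [this]
  have hFcont : Continuous F := by
    refine Continuous.if_le ?_ ?_ continuous_id continuous_const ?_
    · exact (gp_continuous h x y).comp (continuous_const.sub continuous_id)
    · exact (gp_continuous h m z).comp (continuous_id.sub continuous_const)
    · intro s hs
      rw [hs, hmL1, sub_self, gp_zero]
  -- cross injectivity
  have hcross : ∀ s u : ℝ, s ∈ Set.Icc 0 L1 → u ∈ Set.Icc 0 Stot → L1 < u →
      gp h x y (L - s) ≠ gp h m z (u - L1) := by
    intro s u hs hu hlt heq
    set s' := L - s with hs'def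
    set u' := u - L1 with hu'def
    have hs'Icc : s' ∈ Set.Icc 0 L :=
      ⟨by simp only [hs'def]; linarith [hs.2, hL1def, ht₁Icc.1],
       by simp only [hs'def]; linarith [hs.1]⟩
    have hs'ge : t₁ ≤ s' := by simp only [hs'def]; linarith [hs.2, hL1def]
    have hu'pos : 0 < u' := by simp only [hu'def]; linarith
    have hu'le : u' ≤ L2 := by simp only [hu'def]; linarith [hu.2, hSdef]
    have hxp : dist x (gp h x y s') = s' := gp_dist_left h x y hs'Icc
    have hmp : dist m (gp h m z u') = u' := gp_dist_left h m z ⟨hu'pos.le, hu'le⟩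
    have hpz : dist (gp h m z u') z = L2 - u' := gp_dist_right h m z ⟨hu'pos.le, hu'le⟩
    -- triangle inequalities
    have htri1 : dist x z ≤ dist x (gp h x y s') + dist (gp h x y s') z :=
      dist_triangle _ _ _
    have htri2 : dist x (gp h m z u') ≤ dist x m + dist m (gp h m z u') :=
      dist_triangle _ _ _
    rw [heq] at hxp
    rw [hxp, hmp, hxm] at htri2
    have hpz' : dist (gp h x y s') z = L2 - u' := by rw [heq]; exact hpz
    rw [heq, hxp, hpz] at htri1
    -- s' ∈ A
    have hs'A : s' ∈ A := by
      refine ⟨hs'Icc, ?_⟩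
      rw [hpz']
      linarith [key1]
    have : s' ≤ t₁ := le_csSup hAbdd hs'A
    -- but s' = t₁ + u' > t₁
    have hs'eq : s' = t₁ + u' := by linarith [key1]
    linarith
  -- injectivity of F on [0, Stot]
  have hFinj : ∀ s u : ℝ, s ∈ Set.Icc 0 Stot → u ∈ Set.Icc 0 Stot → F s = F u → s = u := by
    intro s u hs hu heq
    by_cases h1 : s ≤ L1 <;> by_cases h2 : u ≤ L1
    · have hd := gp_dist h x y (L - s) (L - u)
      simp only [hFdef, if_pos h1, if_pos h2] at heq
      rw [heq, dist_self,
        clamp_of_mem (show L - s ∈ Set.Icc 0 (dist x y) from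
          ⟨by linarith [h1, hL1def, ht₁Icc.1], by linarith [hs.1, hL]⟩),
        clamp_of_mem (show L - u ∈ Set.Icc 0 (dist x y) from
          ⟨by linarith [h2, hL1def, ht₁Icc.1], by linarith [hu.1, hL]⟩)] at hd
      have := abs_eq_zero.mp hd.symm
      linarith [this.le, this.ge]
    · exfalso
      simp only [hFdef, if_pos h1, if_neg h2] at heq
      exact hcross s u ⟨hs.1, h1⟩ hu (lt_of_not_ge h2) heq
    · exfalso
      simp only [hFdef, if_neg h1, if_pos h2] at heq
      exact hcross u s ⟨hu.1, h2⟩ hs (lt_of_not_ge h1) heq.symm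
    · have hd := gp_dist h m z (s - L1) (u - L1)
      simp only [hFdef, if_neg h1, if_neg h2] at heq
      rw [heq, dist_self,
        clamp_of_mem (show s - L1 ∈ Set.Icc 0 (dist m z) from
          ⟨by linarith [lt_of_not_ge h1], by linarith [hs.2, hSdef, hL2def]⟩),
        clamp_of_mem (show u - L1 ∈ Set.Icc 0 (dist m z) from
          ⟨by linarith [lt_of_not_ge h2], by linarith [hu.2, hSdef, hL2def]⟩)] at hd
      have := abs_eq_zero.mp hd.symm
      linarith [this.le, this.ge]
  -- the reparametrized path on [0,1]
  set f : Set.Icc (0:ℝ) 1 → X := fun t => F ((t : ℝ) * Stot) with hfdef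
  have hmemS : ∀ t : Set.Icc (0:ℝ) 1, (t : ℝ) * Stot ∈ Set.Icc 0 Stot := fun t =>
    ⟨mul_nonneg t.2.1 hSpos.le, mul_le_of_le_one_left hSpos.le t.2.2⟩
  have hfcont : Continuous f :=
    hFcont.comp (continuous_subtype_val.mul continuous_const)
  have hfinj : Function.Injective f := by
    intro t t' heq
    have := hFinj _ _ (hmemS t) (hmemS t') heq
    exact Subtype.ext (mul_right_cancel₀ (ne_of_gt hSpos) this)
  have hf0 : f ⟨0, Set.left_mem_Icc.mpr zero_le_one⟩ = y := by
    simp only [hfdef, hFdef, Set.Icc.coe_zero, zero_mul, if_pos hL1]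
    rw [sub_zero, gp_last]
  have hf1 : f ⟨1, Set.right_mem_Icc.mpr zero_le_one⟩ = z := by
    simp only [hfdef, hFdef, Set.Icc.coe_one, one_mul]
    by_cases hSL : Stot ≤ L1
    · have hL2z : L2 = 0 := by simp only [hSdef] at hSL; linarith
      rw [if_pos hSL]
      have : L - Stot = t₁ := by simp only [hSdef, hL1def, hL2z]; ring
      rw [this]
      rw [← hmdef]  -- may be unnecessary
      have : m = z := by rwa [← dist_eq_zero, ← hL2def]
      exact this
    · rw [if_neg hSL]
      have : Stot - L1 = L2 := by simp only [hSdef]; ring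
      rw [this, hL2def, gp_last]
  have hrange := h.2 f hfcont hfinj
  rw [hf0, hf1] at hrange
  have hmmem : m ∈ Set.range f := by
    refine ⟨⟨L1 / Stot, ⟨div_nonneg hL1 hSpos.le, (div_le_one hSpos).2 (by
      simp only [hSdef]; linarith)⟩⟩, ?_⟩
    simp only [hfdef, hFdef]
    rw [div_mul_cancel₀ _ (ne_of_gt hSpos), if_pos le_rfl, hmL1]
  rw [hrange] at hmmem
  have hgeo : dist y m + dist m z = dist y z := hmmem
  have hcy : dist y m = dist m y := dist_comm y m
  have hcz : dist z m = dist m z := dist_comm z m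
  have hyx : dist y x = dist x y := dist_comm y x
  have hzx : dist z x = dist x z := dist_comm z x
  have hzy : dist z y = dist y z := dist_comm z y
  refine ⟨m, ?_, ?_, ?_⟩ <;> unfold gleg <;>
    linarith [hgeo, key1, hL2def, hL1def, hL, hxm, hmy, hcy, hcz, hyx, hzx, hzy]

/-- Tripod realization: points at prescribed distances along the legs. -/
lemma tripod (h : IsRealTree X) (x y z : X) {a b c : ℝ}
    (ha0 : 0 ≤ a) (hb0 : 0 ≤ b) (hc0 : 0 ≤ c)
    (ha : a ≤ gleg x y z) (hb : b ≤ gleg y x z) (hc : c ≤ gleg z x y) :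
    ∃ x' y' z' : X, dist x' y' = a + b ∧ dist y' z' = b + c ∧ dist z' x' = c + a := by
  obtain ⟨m, hxm, hym, hzm⟩ := exists_branch h x y z
  have hmx : dist m x = gleg x y z := by rw [dist_comm]; exact hxm
  have hmy : dist m y = gleg y x z := by rw [dist_comm]; exact hym
  have hmz : dist m z = gleg z x y := by rw [dist_comm]; exact hzm
  have e1 : dist m x + dist m y = dist x y := by rw [hmx, hmy]; exact gleg_add x y z
  have e2 : dist m y + dist m z = dist y z := by
    rw [hmy, hmz]; unfold gleg
    rw [dist_comm y x, dist_comm z x, dist_comm z y]; ring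
  have e3 : dist m z + dist m x = dist z x := by
    rw [hmz, hmx]; unfold gleg
    rw [dist_comm z x, dist_comm z y]; ring
  have hax : a ∈ Set.Icc 0 (dist m x) := ⟨ha0, by rw [hmx]; exact ha⟩
  have hby : b ∈ Set.Icc 0 (dist m y) := ⟨hb0, by rw [hmy]; exact hb⟩
  have hcz : c ∈ Set.Icc 0 (dist m z) := ⟨hc0, by rw [hmz]; exact hc⟩
  refine ⟨gp h m x a, gp h m y b, gp h m z c, ?_, ?_, ?_⟩
  · have h1 := gp_dist_left h m x hax
    have h2 := gp_dist_left h m y hby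
    have h1' := gp_dist_right h m x hax
    have h2' := gp_dist_right h m y hby
    refine le_antisymm ?_ ?_
    · calc dist (gp h m x a) (gp h m y b)
          ≤ dist (gp h m x a) m + dist m (gp h m y b) := dist_triangle _ _ _
        _ = a + b := by rw [dist_comm (gp h m x a) m, h1, h2]
    · have h4 := dist_triangle4 x (gp h m x a) (gp h m y b) y
      rw [dist_comm x (gp h m x a)] at h4
      linarith
  · have h1 := gp_dist_left h m y hby
    have h2 := gp_dist_left h m z hcz
    have h1' := gp_dist_right h m y hby
    have h2' := gp_dist_right h m z hcz
    refine le_antisymm ?_ ?_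
    · calc dist (gp h m y b) (gp h m z c)
          ≤ dist (gp h m y b) m + dist m (gp h m z c) := dist_triangle _ _ _
        _ = b + c := by rw [dist_comm (gp h m y b) m, h1, h2]
    · have h4 := dist_triangle4 y (gp h m y b) (gp h m z c) z
      rw [dist_comm y (gp h m y b)] at h4
      linarith
  · have h1 := gp_dist_left h m z hcz
    have h2 := gp_dist_left h m x hax
    have h1' := gp_dist_right h m z hcz
    have h2' := gp_dist_right h m x hax
    refine le_antisymm ?_ ?_
    · calc dist (gp h m z c) (gp h m x a)
          ≤ dist (gp h m z c) m + dist m (gp h m x a) := dist_triangle _ _ _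
        _ = c + a := by rw [dist_comm (gp h m z c) m, h1, h2]
    · have h4 := dist_triangle4 z (gp h m z c) (gp h m x a) x
      rw [dist_comm z (gp h m z c)] at h4
      linarith

/-- The defining set of `LCS3`. -/
def lcsSet (A B : Type*) [MetricSpace A] [MetricSpace B] : Set ℝ :=
  {r : ℝ | ∃ (x₁ x₂ x₃ : A) (y₁ y₂ y₃ : B),
    dist x₁ x₂ = dist y₁ y₂ ∧ dist x₂ x₃ = dist y₂ y₃ ∧ dist x₃ x₁ = dist y₃ y₁ ∧
    r = dist x₁ x₂ / 2 + dist x₂ x₃ / 2 + dist x₃ x₁ / 2}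

lemma LCS3_eq (A B : Type*) [MetricSpace A] [MetricSpace B] :
    LCS3 A B = sSup (lcsSet A B) := rfl

lemma zero_mem_lcsSet (A B : Type*) [MetricSpace A] [MetricSpace B]
    [Nonempty A] [Nonempty B] : (0 : ℝ) ∈ lcsSet A B := by
  obtain ⟨a⟩ := ‹Nonempty A›
  obtain ⟨b⟩ := ‹Nonempty B›
  exact ⟨a, a, a, b, b, b, by simp [dist_self]⟩

lemma bddAbove_lcsSet (A B : Type*) [MetricSpace A] [MetricSpace B]
    [CompactSpace A] : BddAbove (lcsSet A B) := by
  refine ⟨3 / 2 * Metric.diam (Set.univ : Set A), ?_⟩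
  rintro r ⟨x₁, x₂, x₃, y₁, y₂, y₃, _, _, _, hr⟩
  have hb : Bornology.IsBounded (Set.univ : Set A) := isCompact_univ.isBounded
  have h1 := Metric.dist_le_diam_of_mem hb (Set.mem_univ x₁) (Set.mem_univ x₂)
  have h2 := Metric.dist_le_diam_of_mem hb (Set.mem_univ x₂) (Set.mem_univ x₃)
  have h3 := Metric.dist_le_diam_of_mem hb (Set.mem_univ x₃) (Set.mem_univ x₁)
  rw [hr]; linarith

/-- Transfer inequality: an approximate triple correspondence bounds `LCS3`. -/
lemma LCS3_le_of_approx {A B A' B' : Type*} [MetricSpace A] [MetricSpace B]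
    [MetricSpace A'] [MetricSpace B'] [Nonempty A] [Nonempty B]
    [CompactSpace A'] [CompactSpace B']
    (hA' : IsRealTree A') (hB' : IsRealTree B') {δ : ℝ}
    (happA : ∀ x₁ x₂ x₃ : A, ∃ y₁ y₂ y₃ : A',
      |dist x₁ x₂ - dist y₁ y₂| ≤ δ ∧ |dist x₂ x₃ - dist y₂ y₃| ≤ δ ∧
      |dist x₃ x₁ - dist y₃ y₁| ≤ δ)
    (happB : ∀ x₁ x₂ x₃ : B, ∃ y₁ y₂ y₃ : B',
      |dist x₁ x₂ - dist y₁ y₂| ≤ δ ∧ |dist x₂ x₃ - dist y₂ y₃| ≤ δ ∧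
      |dist x₃ x₁ - dist y₃ y₁| ≤ δ) :
    LCS3 A B ≤ LCS3 A' B' + 9 / 2 * δ := by
  rw [LCS3_eq, LCS3_eq]
  refine csSup_le ⟨0, zero_mem_lcsSet A B⟩ ?_
  rintro r ⟨x₁, x₂, x₃, y₁, y₂, y₃, h12, h23, h31, hr⟩
  obtain ⟨x'₁, x'₂, x'₃, ha12, ha23, ha31⟩ := happA x₁ x₂ x₃
  obtain ⟨y'₁, y'₂, y'₃, hb12, hb23, hb31⟩ := happB y₁ y₂ y₃
  set c₁ := min (gleg x'₁ x'₂ x'₃) (gleg y'₁ y'₂ y'₃) with hc₁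
  set c₂ := min (gleg x'₂ x'₁ x'₃) (gleg y'₂ y'₁ y'₃) with hc₂
  set c₃ := min (gleg x'₃ x'₁ x'₂) (gleg y'₃ y'₁ y'₂) with hc₃
  have hc₁0 : 0 ≤ c₁ := le_min (gleg_nonneg _ _ _) (gleg_nonneg _ _ _)
  have hc₂0 : 0 ≤ c₂ := le_min (gleg_nonneg _ _ _) (gleg_nonneg _ _ _)
  have hc₃0 : 0 ≤ c₃ := le_min (gleg_nonneg _ _ _) (gleg_nonneg _ _ _)
  obtain ⟨u₁, u₂, u₃, hu12, hu23, hu31⟩ :=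
    tripod hA' x'₁ x'₂ x'₃ hc₁0 hc₂0 hc₃0 (min_le_left _ _) (min_le_left _ _)
      (min_le_left _ _)
  obtain ⟨v₁, v₂, v₃, hv12, hv23, hv31⟩ :=
    tripod hB' y'₁ y'₂ y'₃ hc₁0 hc₂0 hc₃0 (min_le_right _ _) (min_le_right _ _)
      (min_le_right _ _)
  have hmem : c₁ + c₂ + c₃ ∈ lcsSet A' B' := by
    refine ⟨u₁, u₂, u₃, v₁, v₂, v₃, ?_, ?_, ?_, ?_⟩
    · rw [hu12, hv12]
    · rw [hu23, hv23]
    · rw [hu31, hv31]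
    · rw [hu12, hu23, hu31]; ring
  have hle : c₁ + c₂ + c₃ ≤ sSup (lcsSet A' B') :=
    le_csSup (bddAbove_lcsSet A' B') hmem
  -- bound r by c₁ + c₂ + c₃ + 9/2 δ
  have k12 := abs_le.mp ha12
  have k23 := abs_le.mp ha23
  have k31 := abs_le.mp ha31
  have l12 := abs_le.mp hb12
  have l23 := abs_le.mp hb23
  have l31 := abs_le.mp hb31
  have cx13 : dist x₁ x₃ = dist x₃ x₁ := dist_comm _ _
  have cx'13 : dist x'₁ x'₃ = dist x'₃ x'₁ := dist_comm _ _
  have cy13 : dist y₁ y₃ = dist y₃ y₁ := dist_comm _ _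
  have cy'13 : dist y'₁ y'₃ = dist y'₃ y'₁ := dist_comm _ _
  have cx21 : dist x₂ x₁ = dist x₁ x₂ := dist_comm _ _
  have cx'21 : dist x'₂ x'₁ = dist x'₁ x'₂ := dist_comm _ _
  have cy21 : dist y₂ y₁ = dist y₁ y₂ := dist_comm _ _
  have cy'21 : dist y'₂ y'₁ = dist y'₁ y'₂ := dist_comm _ _
  have cx32 : dist x₃ x₂ = dist x₂ x₃ := dist_comm _ _
  have cx'32 : dist x'₃ x'₂ = dist x'₂ x'₃ := dist_comm _ _
  have cy32 : dist y₃ y₂ = dist y₂ y₃ := dist_comm _ _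
  have cy'32 : dist y'₃ y'₂ = dist y'₂ y'₃ := dist_comm _ _
  have hA₁ : gleg x₁ x₂ x₃ - 3 / 2 * δ ≤ c₁ := by
    refine le_min ?_ ?_ <;> unfold gleg <;> linarith
  have hA₂ : gleg x₂ x₁ x₃ - 3 / 2 * δ ≤ c₂ := by
    refine le_min ?_ ?_ <;> unfold gleg <;> linarith
  have hA₃ : gleg x₃ x₁ x₂ - 3 / 2 * δ ≤ c₃ := by
    refine le_min ?_ ?_ <;> unfold gleg <;> linarith
  have hsum : gleg x₁ x₂ x₃ + gleg x₂ x₁ x₃ + gleg x₃ x₁ x₂ = r := by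
    rw [hr]; unfold gleg
    rw [cx21, cx32, cx13]; ring
  linarith

lemma approx_triples {A A' : Type*} [MetricSpace A] [CompactSpace A] [Nonempty A]
    [MetricSpace A'] [CompactSpace A'] [Nonempty A'] {δ : ℝ}
    (h : GromovHausdorff.ghDist A A' < δ) :
    ∀ x₁ x₂ x₃ : A, ∃ y₁ y₂ y₃ : A',
      |dist x₁ x₂ - dist y₁ y₂| ≤ 2 * δ ∧ |dist x₂ x₃ - dist y₂ y₃| ≤ 2 * δ ∧
      |dist x₃ x₁ - dist y₃ y₁| ≤ 2 * δ := by
  obtain ⟨Φ, Ψ, hΦ, hΨ, hd⟩ := GromovHausdorff.ghDist_eq_hausdorffDist A A'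
  have hfin : EMetric.hausdorffEdist (Set.range Φ) (Set.range Ψ) ≠ ⊤ :=
    Metric.hausdorffEdist_ne_top_of_nonempty_of_bounded (Set.range_nonempty _)
      (Set.range_nonempty _) (isCompact_range hΦ.continuous).isBounded
      (isCompact_range hΨ.continuous).isBounded
  have hHd : Metric.hausdorffDist (Set.range Φ) (Set.range Ψ) < δ := by
    rw [← hd]; exact h
  have key : ∀ x : A, ∃ y : A', dist (Φ x) (Ψ y) ≤ δ := by
    intro x
    obtain ⟨q, hq, hlt⟩ :=
      Metric.exists_dist_lt_of_hausdorffDist_lt (Set.mem_range_self x) hHd hfin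
    obtain ⟨y, rfl⟩ := hq
    exact ⟨y, hlt.le⟩
  intro x₁ x₂ x₃
  obtain ⟨y₁, hy₁⟩ := key x₁
  obtain ⟨y₂, hy₂⟩ := key x₂
  obtain ⟨y₃, hy₃⟩ := key x₃
  have bound : ∀ (a b : A) (c d : A'), dist (Φ a) (Ψ c) ≤ δ → dist (Φ b) (Ψ d) ≤ δ →
      |dist a b - dist c d| ≤ 2 * δ := by
    intro a b c d h1 h2
    have h3 := dist_dist_dist_le (Φ a) (Φ b) (Ψ c) (Ψ d)
    rw [Real.dist_eq, hΦ.dist_eq, hΨ.dist_eq] at h3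
    linarith
  exact ⟨y₁, y₂, y₃, bound _ _ _ _ hy₁ hy₂, bound _ _ _ _ hy₂ hy₃, bound _ _ _ _ hy₃ hy₁⟩

lemma ghDist_comm (A A' : Type*) [MetricSpace A] [CompactSpace A] [Nonempty A]
    [MetricSpace A'] [CompactSpace A'] [Nonempty A'] :
    GromovHausdorff.ghDist A' A = GromovHausdorff.ghDist A A' := by
  unfold GromovHausdorff.ghDist
  exact dist_comm _ _

end LCS3Aux

/-- `LCS_3` is continuous for the Gromov–Hausdorff topology on pairs of compact
real trees. -/
theorem LCS3_continuous
    (T S : ℕ → Type) [∀ n, MetricSpace (T n)] [∀ n, CompactSpace (T n)]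
    [∀ n, Nonempty (T n)] [∀ n, MetricSpace (S n)] [∀ n, CompactSpace (S n)]
    [∀ n, Nonempty (S n)]
    (T₀ S₀ : Type) [MetricSpace T₀] [CompactSpace T₀] [Nonempty T₀]
    [MetricSpace S₀] [CompactSpace S₀] [Nonempty S₀]
    (hT : ∀ n, IsRealTree (T n)) (hS : ∀ n, IsRealTree (S n))
    (hT₀ : IsRealTree T₀) (hS₀ : IsRealTree S₀)
    (hTconv : Filter.Tendsto (fun n => GromovHausdorff.ghDist (T n) T₀)
      Filter.atTop (nhds 0))
    (hSconv : Filter.Tendsto (fun n => GromovHausdorff.ghDist (S n) S₀)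
      Filter.atTop (nhds 0)) :
    Filter.Tendsto (fun n => LCS3 (T n) (S n)) Filter.atTop
      (nhds (LCS3 T₀ S₀)) := by
  rw [Metric.tendsto_atTop]
  intro ε hε
  have hδpos : (0 : ℝ) < ε / 19 := by positivity
  rw [Metric.tendsto_atTop] at hTconv hSconv
  obtain ⟨N₁, hN₁⟩ := hTconv (ε / 19) hδpos
  obtain ⟨N₂, hN₂⟩ := hSconv (ε / 19) hδpos
  refine ⟨max N₁ N₂, fun n hn => ?_⟩
  have h1 : GromovHausdorff.ghDist (T n) T₀ < ε / 19 := by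
    have := hN₁ n (le_trans (le_max_left _ _) hn)
    rw [Real.dist_eq, sub_zero] at this
    exact lt_of_abs_lt this
  have h2 : GromovHausdorff.ghDist (S n) S₀ < ε / 19 := by
    have := hN₂ n (le_trans (le_max_right _ _) hn)
    rw [Real.dist_eq, sub_zero] at this
    exact lt_of_abs_lt this
  have h1' : GromovHausdorff.ghDist T₀ (T n) < ε / 19 := by
    rw [LCS3Aux.ghDist_comm]; exact h1
  have h2' : GromovHausdorff.ghDist S₀ (S n) < ε / 19 := by
    rw [LCS3Aux.ghDist_comm]; exact h2
  have hf : LCS3 (T n) (S n) ≤ LCS3 T₀ S₀ + 9 / 2 * (2 * (ε / 19)) :=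
    LCS3Aux.LCS3_le_of_approx hT₀ hS₀ (LCS3Aux.approx_triples h1)
      (LCS3Aux.approx_triples h2)
  have hb : LCS3 T₀ S₀ ≤ LCS3 (T n) (S n) + 9 / 2 * (2 * (ε / 19)) :=
    LCS3Aux.LCS3_le_of_approx (hT n) (hS n) (LCS3Aux.approx_triples h1')
      (LCS3Aux.approx_triples h2')
  rw [Real.dist_eq, abs_lt]
  constructor <;> nlinarith [hε]
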